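/- Under assumptions (iv), (v), (vi) with B' = 𝒳', suppose in addition that X' is measurable from 𝒜 to ℬ' and that P(C) > 0 (note C = {X' ∈ 𝒳'} ∩ C ∈ 𝒜 by (v)). Then X' and X are conditionally independent given C and the conditional law of X given C is π: for every B ∈ ℬ and F ∈ ℬ', P({X' ∈ F} ∩ {X ∈ B} | C) = P(X' ∈ F | C) · P(X ∈ B | C), and P(X ∈ B | C) = π(B). (Corollary 6.3 of the paper.) -/

import Mathlib

open MeasureTheory ProbabilityTheory

/-- Corollary 6.3 of Fill–Machida–Murdoch–Rosenthal:
under assumptions (iv), (v), (vi) with `B' = 𝒳'`, if moreover `X'` is measurable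
and `P(C) > 0`, then `X'` and `X` are conditionally independent given `C`,
and the conditional law of `X` given `C` is `π`. -/
theorem stmt2
    {Ω 𝓧 𝓧' : Type*} [MeasurableSpace Ω] [MeasurableSpace 𝓧] [MeasurableSpace 𝓧']
    (P : Measure Ω) [IsProbabilityMeasure P]
    (π : Measure 𝓧) [IsProbabilityMeasure π]
    (X : Ω → 𝓧) (X' : Ω → 𝓧') (Y : Ω → 𝓧') (C : Set Ω)
    -- (iv): X is measurable with law π
    (hXmeas : Measurable X) (hXlaw : P.map X = π)
    -- (v) with B' = 𝒳'
    (hv : ∀ F : Set 𝓧', MeasurableSet F →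
      MeasurableSet (X' ⁻¹' F ∩ C) ∧ MeasurableSet (Y ⁻¹' F ∩ C))
    -- (vi) with B' = 𝒳'
    (hvi : ∀ F : Set 𝓧', MeasurableSet F → ∀ B : Set 𝓧, MeasurableSet B → 0 < π B →
      P[X' ⁻¹' F ∩ C | X ⁻¹' B] = P (Y ⁻¹' F ∩ C))
    -- X' is measurable
    (hX'meas : Measurable X')
    -- P(C) > 0
    (hpos : 0 < P C) :
    (∀ B : Set 𝓧, MeasurableSet B → ∀ F : Set 𝓧', MeasurableSet F →
        P[X' ⁻¹' F ∩ X ⁻¹' B | C] = P[X' ⁻¹' F | C] * P[X ⁻¹' B | C]) ∧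
      (∀ B : Set 𝓧, MeasurableSet B → P[X ⁻¹' B | C] = π B) := by
  have hCmeas : MeasurableSet C := by
    have h := (hv Set.univ MeasurableSet.univ).1
    simpa using h
  have hPXB : ∀ B : Set 𝓧, MeasurableSet B → P (X ⁻¹' B) = π B := by
    intro B hB
    rw [← hXlaw, Measure.map_apply hXmeas hB]
  have hPC_ne : P C ≠ 0 := hpos.ne'
  have hPC_top : P C ≠ ⊤ := (measure_lt_top P C).ne
  -- Step 1: P (X'⁻¹F ∩ C) = P (Y⁻¹F ∩ C) for measurable F
  have hYC : ∀ F : Set 𝓧', MeasurableSet F → P (X' ⁻¹' F ∩ C) = P (Y ⁻¹' F ∩ C) := by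
    intro F hF
    have h := hvi F hF Set.univ MeasurableSet.univ (by simp)
    rw [cond_apply (by simpa using hXmeas MeasurableSet.univ)] at h
    simpa using h
  -- Step 2: key product formula
  have hkey : ∀ F : Set 𝓧', MeasurableSet F → ∀ B : Set 𝓧, MeasurableSet B →
      P (X ⁻¹' B ∩ (X' ⁻¹' F ∩ C)) = P (X' ⁻¹' F ∩ C) * π B := by
    intro F hF B hB
    rcases eq_or_lt_of_le (zero_le : 0 ≤ π B) with h0 | h0
    · have hB0 : P (X ⁻¹' B) = 0 := by rw [hPXB B hB, ← h0]
      rw [← h0, mul_zero]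
      exact measure_mono_null Set.inter_subset_left hB0
    · have h := hvi F hF B hB h0
      rw [cond_apply (hXmeas hB)] at h
      have hne : P (X ⁻¹' B) ≠ 0 := by rw [hPXB B hB]; exact h0.ne'
      have htop : P (X ⁻¹' B) ≠ ⊤ := (measure_lt_top _ _).ne
      calc P (X ⁻¹' B ∩ (X' ⁻¹' F ∩ C))
          = P (X ⁻¹' B) * ((P (X ⁻¹' B))⁻¹ * P (X ⁻¹' B ∩ (X' ⁻¹' F ∩ C))) := by
            rw [← mul_assoc, ENNReal.mul_inv_cancel hne htop, one_mul]
        _ = P (X' ⁻¹' F ∩ C) * π B := by rw [h, ← hYC F hF, ← hPXB B hB, mul_comm]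
  -- conditional law of X given C is π
  have hlaw : ∀ B : Set 𝓧, MeasurableSet B → P[X ⁻¹' B | C] = π B := by
    intro B hB
    have h := hkey Set.univ MeasurableSet.univ B hB
    simp only [Set.preimage_univ, Set.univ_inter] at h
    rw [cond_apply hCmeas, Set.inter_comm C (X ⁻¹' B), h, ← mul_assoc,
      ENNReal.inv_mul_cancel hPC_ne hPC_top, one_mul]
  refine ⟨fun B hB F hF => ?_, hlaw⟩
  have hset : C ∩ (X' ⁻¹' F ∩ X ⁻¹' B) = X ⁻¹' B ∩ (X' ⁻¹' F ∩ C) := by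
    ext x; simp; tauto
  rw [cond_apply hCmeas, hset, hkey F hF B hB, hlaw B hB,
    cond_apply hCmeas, Set.inter_comm C (X' ⁻¹' F)]
  ring
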